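/- Let < be a bi-order on the free group F₂ on two generators and let α, β > 0. If < is of type α and of type β, then α = β. -/

import Mathlib

/-- A bi-order on a group `G`: a strict linear order (irreflexive, transitive, total)
invariant under left and right multiplication. -/
structure IsBiOrder {G : Type*} [Group G] (r : G → G → Prop) : Prop where
  irrefl : ∀ x, ¬ r x x
  trans : ∀ x y z, r x y → r y z → r x z
  total : ∀ x y, x ≠ y → r x y ∨ r y x
  mul_left : ∀ x y z, r x y → r (z * x) (z * y)
  mul_right : ∀ x y z, r x y → r (x * z) (y * z)

/-- The supremum of a set of reals, computed in the extended reals `[-∞, +∞]`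
(so that `realSup ∅ = ⊥ = -∞`). -/
noncomputable def realSup (s : Set ℝ) : EReal :=
  sSup ((fun x : ℝ => (x : EReal)) '' s)

/-- A subgroup `C` is convex with respect to the order `r`: if `a ≤ g ≤ b`
with `a, b ∈ C`, then `g ∈ C`. -/
def IsConvexSubgroup {G : Type*} [Group G] (r : G → G → Prop) (C : Subgroup G) : Prop :=
  ∀ a b g : G, a ∈ C → b ∈ C → (r a g ∨ a = g) → (r g b ∨ g = b) → g ∈ C

/-- `C ⊊ D` is a convex jump: both are convex and no convex subgroup lies strictly
between them. -/
def IsConvexJump {G : Type*} [Group G] (r : G → G → Prop) (C D : Subgroup G) : Prop :=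
  IsConvexSubgroup r C ∧ IsConvexSubgroup r D ∧ C < D ∧
    ∀ E : Subgroup G, IsConvexSubgroup r E → C < E → ¬ E < D

/-- `C` is the largest convex subgroup (w.r.t. `r`) not containing `g`. -/
def IsLargestConvexNotContaining {G : Type*} [Group G]
    (r : G → G → Prop) (g : G) (C : Subgroup G) : Prop :=
  IsConvexSubgroup r C ∧ g ∉ C ∧
    ∀ E : Subgroup G, IsConvexSubgroup r E → g ∉ E → E ≤ C

/-- `D` is the smallest convex subgroup (w.r.t. `r`) containing `g`. -/
def IsSmallestConvexContaining {G : Type*} [Group G]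
    (r : G → G → Prop) (g : G) (D : Subgroup G) : Prop :=
  IsConvexSubgroup r D ∧ g ∈ D ∧
    ∀ E : Subgroup G, IsConvexSubgroup r E → g ∈ E → D ≤ E

/-- `(a, b)` is a free basis of the free group on two generators. -/
def IsFreeBasis (a b : FreeGroup (Fin 2)) : Prop :=
  Function.Bijective (FreeGroup.lift ![a, b] : FreeGroup (Fin 2) →* FreeGroup (Fin 2))

/-- A bi-order `r` on `F₂` is of type `α`: there is a free basis `(a, b)` of positive
elements with `C_a = D_b`, such that `a` normalizes both `C_b` and `D_b`, and the Conrad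
homomorphism `ψ` of the jump `C_b < D_b` satisfies `ψ (a * h * a⁻¹) = α * ψ h`. -/
def IsOrderOfType (r : FreeGroup (Fin 2) → FreeGroup (Fin 2) → Prop) (α : ℝ) : Prop :=
  ∃ a b : FreeGroup (Fin 2), IsFreeBasis a b ∧ r 1 a ∧ r 1 b ∧
    ∃ Ca Cb Db : Subgroup (FreeGroup (Fin 2)),
      IsLargestConvexNotContaining r a Ca ∧
      IsLargestConvexNotContaining r b Cb ∧
      IsSmallestConvexContaining r b Db ∧
      Ca = Db ∧
      (∀ x, x ∈ Cb ↔ a * x * a⁻¹ ∈ Cb) ∧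
      (∀ x, x ∈ Db ↔ a * x * a⁻¹ ∈ Db) ∧
      ∃ ψ : Db → ℝ, (∀ x y : Db, ψ (x * y) = ψ x + ψ y) ∧
        (∀ x : Db, ψ x = 0 ↔ (x : FreeGroup (Fin 2)) ∈ Cb) ∧
        (∀ x : Db, r 1 (x : FreeGroup (Fin 2)) → (x : FreeGroup (Fin 2)) ∉ Cb → 0 < ψ x) ∧
        (∀ (h : FreeGroup (Fin 2)) (hm : h ∈ Db) (hm' : a * h * a⁻¹ ∈ Db),
          ψ ⟨a * h * a⁻¹, hm'⟩ = α * ψ ⟨h, hm⟩)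

section helpers
variable {G : Type*} [Group G] {r : G → G → Prop}

lemma bo_asymm (hr : IsBiOrder r) {x y : G} (h : r x y) : ¬ r y x :=
  fun h' => hr.irrefl x (hr.trans x y x h h')

lemma bo_inv (hr : IsBiOrder r) {x y : G} (h : r x y) : r y⁻¹ x⁻¹ := by
  have := hr.mul_right _ _ y⁻¹ (hr.mul_left _ _ x⁻¹ h)
  simpa [mul_assoc] using this

lemma bo_one_lt_pow (hr : IsBiOrder r) {a : G} (ha : r 1 a) : ∀ n : ℕ, r 1 (a ^ (n + 1)) := by
  intro n
  induction n with
  | zero => simpa using ha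
  | succ k ih =>
    have h2 : r (a ^ (k + 1)) (a ^ (k + 1) * a) := by
      simpa using hr.mul_left _ _ (a ^ (k + 1)) ha
    have := hr.trans _ _ _ ih h2
    simpa [pow_succ] using this

lemma bo_zpow_neg (hr : IsBiOrder r) {a : G} (ha : r 1 a) {k : ℤ} (hk : k < 0) :
    r (a ^ k) 1 := by
  obtain ⟨n, hn⟩ : ∃ n : ℕ, -k = (n : ℤ) + 1 := by
    refine ⟨(-k - 1).toNat, ?_⟩
    omega
  have h1 : r 1 (a ^ (n + 1)) := bo_one_lt_pow hr ha n
  have h2 : r (a ^ (n + 1))⁻¹ 1 := by simpa using bo_inv hr h1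
  have hk' : k = -((n : ℤ) + 1) := by omega
  rw [hk']
  rw [zpow_neg]
  have : a ^ ((n : ℤ) + 1) = a ^ (n + 1) := by
    rw [← zpow_natCast]; push_cast; ring_nf
  rw [this]
  exact h2

/-- Convex subgroups are totally ordered. -/
lemma convex_total (hr : IsBiOrder r) {C E : Subgroup G}
    (hC : IsConvexSubgroup r C) (hE : IsConvexSubgroup r E) : C ≤ E ∨ E ≤ C := by
  by_contra h
  push_neg at h
  obtain ⟨h1, h2⟩ := h
  obtain ⟨c, hcC, hcE⟩ := SetLike.not_le_iff_exists.mp h1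
  obtain ⟨e, heE, heC⟩ := SetLike.not_le_iff_exists.mp h2
  -- make c positive
  have hex : ∃ c, c ∈ C ∧ c ∉ E ∧ r 1 c := by
    have hc1 : c ≠ 1 := fun h => hcE (h ▸ E.one_mem)
    rcases hr.total 1 c (Ne.symm hc1) with h | h
    · exact ⟨c, hcC, hcE, h⟩
    · exact ⟨c⁻¹, C.inv_mem hcC, fun hh => hcE (by simpa using E.inv_mem hh),
        by simpa using bo_inv hr h⟩
  have hex' : ∃ e, e ∈ E ∧ e ∉ C ∧ r 1 e := by
    have he1 : e ≠ 1 := fun h => heC (h ▸ C.one_mem)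
    rcases hr.total 1 e (Ne.symm he1) with h | h
    · exact ⟨e, heE, heC, h⟩
    · exact ⟨e⁻¹, E.inv_mem heE, fun hh => heC (by simpa using C.inv_mem hh),
        by simpa using bo_inv hr h⟩
  obtain ⟨c, hcC, hcE, hc⟩ := hex
  obtain ⟨e, heE, heC, he⟩ := hex'
  have hne : c ≠ e := fun h => hcE (h ▸ heE)
  rcases hr.total c e hne with h | h
  · exact hcE (hE 1 e c E.one_mem heE (Or.inl hc) (Or.inl h))
  · exact heC (hC 1 c e C.one_mem hcC (Or.inl he) (Or.inl h))

/-- Elements of a convex subgroup are below any positive element not in it. -/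
lemma convex_lt (hr : IsBiOrder r) {C : Subgroup G} (hC : IsConvexSubgroup r C)
    {g : G} (hg1 : r 1 g) (hg : g ∉ C) {m : G} (hm : m ∈ C) : r m g := by
  have hne : m ≠ g := fun h => hg (h ▸ hm)
  rcases hr.total m g hne with h | h
  · exact h
  · exact absurd (hC 1 m g C.one_mem hm (Or.inl hg1) (Or.inl h)) hg

end helpers

section psi
variable {H : Type*} [Group H] {ψ : H → ℝ}

lemma psi_one (hmul : ∀ x y, ψ (x * y) = ψ x + ψ y) : ψ 1 = 0 := by
  have := hmul 1 1
  simpa using this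

lemma psi_inv (hmul : ∀ x y, ψ (x * y) = ψ x + ψ y) (x : H) : ψ x⁻¹ = -ψ x := by
  have := hmul x x⁻¹
  rw [mul_inv_cancel] at this
  rw [psi_one hmul] at this
  linarith

lemma psi_pow (hmul : ∀ x y, ψ (x * y) = ψ x + ψ y) (x : H) : ∀ n : ℕ, ψ (x ^ n) = n * ψ x := by
  intro n
  induction n with
  | zero => simpa using psi_one hmul
  | succ k ih => rw [pow_succ, hmul, ih]; push_cast; ring

lemma psi_zpow (hmul : ∀ x y, ψ (x * y) = ψ x + ψ y) (x : H) (n : ℤ) :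
    ψ (x ^ n) = n * ψ x := by
  rcases n with n | n
  · rw [Int.ofNat_eq_coe, zpow_natCast, psi_pow hmul]; norm_num
  · rw [zpow_negSucc, psi_inv hmul, psi_pow hmul]; push_cast; ring

lemma ratio_le {ψ' : H → ℝ} (hmul : ∀ x y, ψ (x * y) = ψ x + ψ y)
    (hmul' : ∀ x y, ψ' (x * y) = ψ' x + ψ' y)
    (hsign : ∀ y, 0 < ψ y ↔ 0 < ψ' y)
    {b0 : H} (hb : 0 < ψ b0) (hb' : 0 < ψ' b0) (x : H) :
    ψ x * ψ' b0 ≤ ψ' x * ψ b0 := by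
  by_contra hcon
  push_neg at hcon
  have hlt : ψ' x / ψ' b0 < ψ x / ψ b0 := by
    rw [div_lt_div_iff₀ hb' hb]
    linarith
  obtain ⟨q, hq1, hq2⟩ := exists_rat_btwn hlt
  set y := x ^ (q.den : ℤ) * b0 ^ (-q.num) with hy
  have hden : (0:ℝ) < (q.den : ℝ) := by positivity
  have hqr : (q : ℝ) = (q.num : ℝ) / (q.den : ℝ) := by
    rw [Rat.cast_def]
  have hψy : ψ y = (q.den : ℝ) * ψ x - (q.num : ℝ) * ψ b0 := by
    rw [hy, hmul, psi_zpow hmul, psi_zpow hmul]; push_cast; ring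
  have hψ'y : ψ' y = (q.den : ℝ) * ψ' x - (q.num : ℝ) * ψ' b0 := by
    rw [hy, hmul', psi_zpow hmul', psi_zpow hmul']; push_cast; ring
  have h1 : 0 < ψ y := by
    rw [hψy]
    have h : (q : ℝ) * ψ b0 < ψ x := (lt_div_iff₀ hb).mp hq2
    rw [hqr, div_mul_eq_mul_div, div_lt_iff₀ hden] at h
    nlinarith
  have h2 : 0 < ψ' y := (hsign y).mp h1
  rw [hψ'y] at h2
  have : (q:ℝ) < ψ' x / ψ' b0 := by
    rw [hqr, div_lt_div_iff₀ hden hb']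
    nlinarith
  linarith
end psi

lemma top_of_basis {a b : FreeGroup (Fin 2)} (hab : IsFreeBasis a b)
    (E : Subgroup (FreeGroup (Fin 2))) (ha : a ∈ E) (hb : b ∈ E) : E = ⊤ := by
  rw [eq_top_iff]
  intro x _
  obtain ⟨y, rfl⟩ := hab.surjective x
  have hrange : (FreeGroup.lift ![a, b]).range ≤ E := by
    rw [FreeGroup.range_lift_eq_closure]
    apply Subgroup.closure_le E |>.mpr
    rintro z ⟨i, rfl⟩
    fin_cases i
    · simpa using ha
    · simpa using hb
  exact hrange ⟨y, rfl⟩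

section sign
variable {G : Type*} [Group G] {r : G → G → Prop}

lemma psi_pos_iff (hr : IsBiOrder r) {Cb Db : Subgroup G} {ψ : Db → ℝ}
    (hmul : ∀ x y : Db, ψ (x * y) = ψ x + ψ y)
    (hker : ∀ x : Db, ψ x = 0 ↔ (x : G) ∈ Cb)
    (hpos : ∀ x : Db, r 1 (x : G) → (x : G) ∉ Cb → 0 < ψ x)
    (x : Db) : 0 < ψ x ↔ ((x : G) ∉ Cb ∧ r 1 (x : G)) := by
  constructor
  · intro h
    have hxC : (x : G) ∉ Cb := fun hc => by
      have := (hker x).mpr hc; linarith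
    refine ⟨hxC, ?_⟩
    have hx1 : (x : G) ≠ 1 := by
      intro hc
      have : x = 1 := by ext; simpa using hc
      rw [this] at h
      have h1 : ψ (1 : Db) = 0 := by have := hmul 1 1; simpa using this
      linarith
    rcases hr.total 1 (x : G) (Ne.symm hx1) with hh | hh
    · exact hh
    · exfalso
      have hi : r 1 ((x⁻¹ : Db) : G) := by
        have := hr.mul_right _ _ (x : G)⁻¹ hh
        simpa using this
      have hiC : ((x⁻¹ : Db) : G) ∉ Cb := by
        simpa using fun hc => hxC (by simpa using Cb.inv_mem hc)
      have := hpos x⁻¹ hi hiC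
      have hinv : ψ x⁻¹ = -ψ x := by
        have h2 := hmul x x⁻¹
        rw [mul_inv_cancel] at h2
        have h1 : ψ (1 : Db) = 0 := by have := hmul 1 1; simpa using this
        rw [h1] at h2; linarith
      rw [hinv] at this; linarith
  · intro ⟨h1, h2⟩
    exact hpos x h2 h1

end sign

section main

abbrev F2 := FreeGroup (Fin 2)

lemma le_Ca {r : F2 → F2 → Prop} (hr : IsBiOrder r) {a b : F2} (hab : IsFreeBasis a b)
    {Ca Db : Subgroup F2} (hCa : IsLargestConvexNotContaining r a Ca)
    (hDb : IsSmallestConvexContaining r b Db) (hEq : Ca = Db)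
    {E : Subgroup F2} (hE : IsConvexSubgroup r E) (hne : E ≠ ⊤) : E ≤ Ca := by
  by_cases haE : a ∈ E
  · exfalso
    rcases convex_total hr hCa.1 hE with h | h
    · have hbE : b ∈ E := h (by rw [hEq]; exact hDb.2.1)
      exact hne (top_of_basis hab E haE hbE)
    · exact hCa.2.1 (h haE)
  · exact hCa.2.2 E hE haE

lemma exists_pow {r : F2 → F2 → Prop} (hr : IsBiOrder r) {α β : ℝ}
    (h1 : IsOrderOfType r α) (h2 : IsOrderOfType r β) :
    ∃ n : ℕ, 1 ≤ n ∧ β = α ^ n := by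
  obtain ⟨a, b, hab, ha1, hb1, Ca, Cb, Db, hCa, hCb, hDb, hCaDb, -, hconjDb,
    ψ, ψmul, ψker, ψpos, ψconj⟩ := h1
  obtain ⟨a', b', hab', ha'1, hb'1, Ca', Cb', Db', hCa', hCb', hDb', hCaDb', -, hconjDb',
    ψ', ψ'mul, ψ'ker, ψ'pos, ψ'conj⟩ := h2
  -- Step 1: Ca' = Ca
  have hCane : Ca ≠ ⊤ := fun h => hCa.2.1 (h ▸ Subgroup.mem_top a)
  have hCa'ne : Ca' ≠ ⊤ := fun h => hCa'.2.1 (h ▸ Subgroup.mem_top a')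
  have hCaCa' : Ca = Ca' :=
    le_antisymm (le_Ca hr hab' hCa' hDb' hCaDb' hCa.1 hCane)
      (le_Ca hr hab hCa hDb hCaDb hCa'.1 hCa'ne)
  subst hCaCa'
  -- Step 2: Db' = Db
  have hDbDb' : Db = Db' := by rw [← hCaDb', hCaDb]
  subst hDbDb'
  -- Step 3: Cb' = Cb
  have hb'Cb : b' ∉ Cb := by
    intro h
    have hle : Db ≤ Cb := hDb'.2.2 Cb hCb.1 h
    exact hCb.2.1 (hle hDb.2.1)
  have hbCb' : b ∉ Cb' := by
    intro h
    have hle : Db ≤ Cb' := hDb.2.2 Cb' hCb'.1 h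
    exact hCb'.2.1 (hle hDb'.2.1)
  have hCbCb' : Cb = Cb' :=
    le_antisymm (hCb'.2.2 Cb hCb.1 hb'Cb) (hCb.2.2 Cb' hCb'.1 hbCb')
  subst hCbCb'
  -- Step 4: sign agreement and proportionality
  have hsign : ∀ x : Db, 0 < ψ x ↔ 0 < ψ' x := fun x =>
    (psi_pos_iff hr ψmul ψker ψpos x).trans (psi_pos_iff hr ψ'mul ψ'ker ψ'pos x).symm
  set b0 : Db := ⟨b, hDb.2.1⟩ with hb0
  have hbψ : 0 < ψ b0 := ψpos b0 hb1 hCb.2.1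
  have hbψ' : 0 < ψ' b0 := ψ'pos b0 hb1 hCb.2.1
  have hprop : ∀ x : Db, ψ' x * ψ b0 = ψ x * ψ' b0 := fun x =>
    le_antisymm (ratio_le ψ'mul ψmul (fun y => (hsign y).symm) hbψ' hbψ x)
      (ratio_le ψmul ψ'mul hsign hbψ hbψ' x)
  -- Step 5: a-conjugation preserves Db (all integer powers)
  have hzDb : ∀ (n : ℤ) (x : F2), x ∈ Db → a ^ n * x * a ^ (-n) ∈ Db := by
    intro n
    induction n using Int.induction_on with
    | zero => intro x hx; simpa using hx
    | succ k ih =>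
      intro x hx
      have h1 := (hconjDb (a ^ (k : ℤ) * x * a ^ (-(k : ℤ)))).mp (ih x hx)
      have heq : a ^ ((k : ℤ) + 1) * x * a ^ (-((k : ℤ) + 1)) =
          a * (a ^ (k : ℤ) * x * a ^ (-(k : ℤ))) * a⁻¹ := by group
      rw [heq]; exact h1
    | pred k ih =>
      intro x hx
      apply (hconjDb _).mpr
      have heq : a * (a ^ (-(k : ℤ) - 1) * x * a ^ (-(-(k : ℤ) - 1))) * a⁻¹ =
          a ^ (-(k : ℤ)) * x * a ^ (-(-(k : ℤ))) := by group
      rw [heq]; exact ih x hx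
  -- Step 6: iterated conjugation formula for ψ
  have hψpow : ∀ (n : ℕ) (h : F2) (hm : h ∈ Db)
      (hm' : a ^ (n : ℤ) * h * a ^ (-(n : ℤ)) ∈ Db),
      ψ ⟨a ^ (n : ℤ) * h * a ^ (-(n : ℤ)), hm'⟩ = α ^ n * ψ ⟨h, hm⟩ := by
    intro n
    induction n with
    | zero =>
      intro h hm hm'
      have heq : (⟨a ^ ((0:ℕ) : ℤ) * h * a ^ (-((0:ℕ) : ℤ)), hm'⟩ : Db) = ⟨h, hm⟩ := by
        ext; simp
      rw [heq]; simp
    | succ k ih =>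
      intro h hm hm'
      have hmem : a ^ (k : ℤ) * h * a ^ (-(k : ℤ)) ∈ Db := hzDb k h hm
      have heq : a ^ (((k+1:ℕ)) : ℤ) * h * a ^ (-(((k+1:ℕ)) : ℤ)) =
          a * (a ^ (k : ℤ) * h * a ^ (-(k : ℤ))) * a⁻¹ := by push_cast; group
      have hm2 : a * (a ^ (k : ℤ) * h * a ^ (-(k : ℤ))) * a⁻¹ ∈ Db := heq ▸ hm'
      have h1 : (⟨a ^ (((k+1:ℕ)) : ℤ) * h * a ^ (-(((k+1:ℕ)) : ℤ)), hm'⟩ : Db) =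
          ⟨a * (a ^ (k : ℤ) * h * a ^ (-(k : ℤ))) * a⁻¹, hm2⟩ := by ext; exact heq
      rw [h1, ψconj _ hmem hm2, ih h hm hmem]
      ring
  -- Step 7: generation, a' = a ^ n * m with m ∈ Db
  have haDb : a ∉ Db := fun h => hCa.2.1 (hCaDb ▸ h)
  have ha'Db : a' ∉ Db := fun h => hCa'.2.1 (hCaDb ▸ h)
  let Hgen : Subgroup F2 :=
    { carrier := {x | ∃ n : ℤ, a ^ (-n) * x ∈ Db}
      one_mem' := ⟨0, by simpa using Db.one_mem⟩
      mul_mem' := by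
        rintro x y ⟨n, hn⟩ ⟨k, hk⟩
        refine ⟨n + k, ?_⟩
        have heq : a ^ (-(n + k)) * (x * y) =
            (a ^ (-k) * (a ^ (-n) * x) * a ^ (-(-k))) * (a ^ (-k) * y) := by group
        rw [heq]
        exact Db.mul_mem (hzDb (-k) _ hn) hk
      inv_mem' := by
        rintro x ⟨n, hn⟩
        refine ⟨-n, ?_⟩
        have heq : a ^ (-(-n)) * x⁻¹ = a ^ n * (a ^ (-n) * x)⁻¹ * a ^ (-n) := by group
        rw [heq]
        exact hzDb n _ (Db.inv_mem hn)
      }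
  have haH : a ∈ Hgen := ⟨1, by
    have heq : a ^ (-(1:ℤ)) * a = 1 := by group
    rw [heq]; exact Db.one_mem⟩
  have hbH : b ∈ Hgen := ⟨0, by simpa using hDb.2.1⟩
  have htopH : Hgen = ⊤ := top_of_basis hab Hgen haH hbH
  have ha'H : ∃ n : ℤ, a ^ (-n) * a' ∈ Db := by
    have : a' ∈ Hgen := htopH ▸ Subgroup.mem_top a'
    exact this
  obtain ⟨n, hmDb⟩ := ha'H
  set m : F2 := a ^ (-n) * a' with hmdef
  have ha'eq : a' = a ^ n * m := by rw [hmdef]; group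
  -- Step 8: n ≥ 1
  have hn1 : 1 ≤ n := by
    by_contra hcon
    push_neg at hcon
    have hn0 : n ≠ 0 := by
      intro h
      apply ha'Db
      have : m = a' := by rw [hmdef, h]; group
      rw [← this]; exact hmDb
    have hnneg : n < 0 := by omega
    -- m < a, so a' = a^n * m < a^(n+1) ≤ 1
    have hma : r m a := convex_lt hr hDb.1 ha1 haDb hmDb
    have h1 : r (a ^ n * m) (a ^ n * a) := hr.mul_left _ _ _ hma
    have h2 : a ^ n * a = a ^ (n + 1) := by group
    rw [h2, ← ha'eq] at h1
    have h3 : r a' 1 := by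
      rcases eq_or_lt_of_le (by omega : n + 1 ≤ 0) with h | h
      · rw [h, zpow_zero] at h1; exact h1
      · exact hr.trans _ _ _ h1 (bo_zpow_neg hr ha1 h)
    exact bo_asymm hr ha'1 h3
  set n₀ : ℕ := n.toNat with hn₀
  have hcast : (n₀ : ℤ) = n := Int.toNat_of_nonneg (by omega)
  -- Step 9: final computation at h = b
  have hmm : m ∈ Db := hmDb
  have hmbm : m * b * m⁻¹ ∈ Db := Db.mul_mem (Db.mul_mem hmm hDb.2.1) (Db.inv_mem hmm)
  have hconjmem : a ^ ((n₀ : ℕ) : ℤ) * (m * b * m⁻¹) * a ^ (-((n₀ : ℕ) : ℤ)) ∈ Db := by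
    rw [hcast]; exact hzDb n _ hmbm
  have heq2 : a' * b * a'⁻¹ = a ^ ((n₀ : ℕ) : ℤ) * (m * b * m⁻¹) * a ^ (-((n₀ : ℕ) : ℤ)) := by
    rw [hcast, ha'eq]; group
  have hm' : a' * b * a'⁻¹ ∈ Db := by rw [heq2]; exact hconjmem
  have e1 : ψ' ⟨a' * b * a'⁻¹, hm'⟩ = β * ψ' b0 := ψ'conj b hDb.2.1 hm'
  have e2 : ψ' ⟨a' * b * a'⁻¹, hm'⟩ * ψ b0 = ψ ⟨a' * b * a'⁻¹, hm'⟩ * ψ' b0 := hprop _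
  have e3 : ψ ⟨a' * b * a'⁻¹, hm'⟩ = α ^ n₀ * ψ b0 := by
    have hsub : (⟨a' * b * a'⁻¹, hm'⟩ : Db) =
        ⟨a ^ ((n₀ : ℕ) : ℤ) * (m * b * m⁻¹) * a ^ (-((n₀ : ℕ) : ℤ)), hconjmem⟩ := by
      ext; exact heq2
    rw [hsub, hψpow n₀ (m * b * m⁻¹) hmbm hconjmem]
    have hsub2 : (⟨m * b * m⁻¹, hmbm⟩ : Db) = ⟨m, hmm⟩ * b0 * (⟨m, hmm⟩)⁻¹ := rfl
    rw [hsub2, ψmul, ψmul, psi_inv ψmul]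
    ring
  have hprodpos : (0:ℝ) < ψ' b0 * ψ b0 := mul_pos hbψ' hbψ
  have h6 : β * (ψ' b0 * ψ b0) = α ^ n₀ * (ψ' b0 * ψ b0) := by
    linear_combination (-(ψ b0)) * e1 + e2 + (ψ' b0) * e3
  have hfin : β = α ^ n₀ := mul_right_cancel₀ (ne_of_gt hprodpos) h6
  exact ⟨n₀, by omega, hfin⟩

end main

/-- The type of a bi-order on `F₂` is well defined: a bi-order of type `α` and of
type `β` (with `α, β > 0`) forces `α = β`. -/
theorem order_type_unique (r : FreeGroup (Fin 2) → FreeGroup (Fin 2) → Prop)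
    (hr : IsBiOrder r) (α β : ℝ) (hα : 0 < α) (hβ : 0 < β)
    (h1 : IsOrderOfType r α) (h2 : IsOrderOfType r β) : α = β := by
  obtain ⟨n, hn, hbeta⟩ := exists_pow hr h1 h2
  obtain ⟨k, hk, halpha⟩ := exists_pow hr h2 h1
  have hnk : α ^ (n * k) = α := by rw [pow_mul, ← hbeta, ← halpha]
  have h1le : 1 ≤ n * k := Nat.one_le_iff_ne_zero.mpr (by positivity)
  rcases lt_trichotomy α 1 with h | h | h
  · have hnk1 : n * k = 1 := by
      by_contra hc
      have h2' : 1 < n * k := by omega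
      have := pow_lt_pow_right_of_lt_one₀ hα h h2'
      rw [hnk, pow_one] at this
      exact absurd this (lt_irrefl α)
    have hn1 : n = 1 := Nat.eq_one_of_mul_eq_one_right hnk1
    rw [hbeta, hn1, pow_one]
  · rw [hbeta, h, one_pow]
  · have hnk1 : n * k = 1 := by
      by_contra hc
      have h2' : 1 < n * k := by omega
      have := pow_lt_pow_right₀ h h2'
      rw [hnk, pow_one] at this
      exact absurd this (lt_irrefl α)
    have hn1 : n = 1 := Nat.eq_one_of_mul_eq_one_right hnk1
    rw [hbeta, hn1, pow_one]
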